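/- Let P be a finite poset with a unique minimal element 0̂ and let x ∈ P. Then there exists a poset isomorphism φ : ∏_{y ∈ D(x)} [0̂,y] → [0̂,x] such that for each y ∈ D(x), φ sends the tuple which is y in the coordinate indexed by y and 0̂ in all other coordinates to y; moreover each interval [0̂,y] for y ∈ D(x) is irreducible. -/

import Mathlib

attribute [local instance] Classical.propDecidable

universe u

/-- The set of maximal elements of `G` below `x`. -/
def maxBelow {L : Type u} [PartialOrder L] (G : Set L) (x : L) : Set L :=
  {g | g ∈ G ∧ g ≤ x ∧ ∀ h ∈ G, h ≤ x → g ≤ h → h = g}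

/-- The tuple in the product of lower intervals which is `g` in the coordinate
indexed by `g` and bottom elsewhere. -/
noncomputable def deltaTuple {L : Type u} [PartialOrder L] [OrderBot L] (G : Set L) (x : L)
    (g : maxBelow G x) : (h : maxBelow G x) → Set.Iic (h : L) :=
  fun h => if (h : L) = (g : L) then ⟨(h : L), le_refl _⟩ else ⟨⊥, bot_le⟩

/-- A poset is irreducible if it is not order-isomorphic to a product of two posets,
each having at least two elements. -/
def IsIrreduciblePoset (P : Type u) [PartialOrder P] : Prop :=
  ¬ ∃ (A : Type u) (B : Type u) (_ : PartialOrder A) (_ : PartialOrder B),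
      Nontrivial A ∧ Nontrivial B ∧ Nonempty (P ≃o A × B)

/-- An element `x` is irreducible if the interval `[⊥, x]` is an irreducible poset. -/
def IsIrredElem {L : Type u} [PartialOrder L] (x : L) : Prop :=
  IsIrreduciblePoset (Set.Iic x)

/-- The set of elementary divisors of `x`: the maximal irreducible elements below `x`. -/
abbrev elemDivisors {L : Type u} [PartialOrder L] (x : L) : Set L :=
  maxBelow {y | IsIrredElem y} x

/- ## Helpers -/

/-- transport an interval along an order iso -/
def OrderIso.mapIic' {α β : Type u} [PartialOrder α] [PartialOrder β] (e : α ≃o β) (q : α) :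
    Set.Iic q ≃o Set.Iic (e q) where
  toFun z := ⟨e z, e.monotone z.2⟩
  invFun z := ⟨e.symm z, by
    have := e.symm.monotone z.2
    simpa using this⟩
  left_inv z := Subtype.ext (e.symm_apply_apply _)
  right_inv z := Subtype.ext (e.apply_symm_apply _)
  map_rel_iff' {z w} := by exact e.le_iff_le

/-- interval inside interval -/
def iicIicIso {α : Type u} [PartialOrder α] {x y : α} (hy : y ≤ x) :
    Set.Iic (⟨y, hy⟩ : Set.Iic x) ≃o Set.Iic y where
  toFun z := ⟨z.val.val, z.2⟩
  invFun z := ⟨⟨z.val, z.2.trans hy⟩, z.2⟩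
  left_inv z := rfl
  right_inv z := rfl
  map_rel_iff' {z w} := Iff.rfl

/-- interval in a product -/
def iicProdIso {α β : Type u} [PartialOrder α] [PartialOrder β] (q : α) (r : β) :
    Set.Iic ((q, r) : α × β) ≃o Set.Iic q × Set.Iic r where
  toFun z := (⟨z.val.1, z.2.1⟩, ⟨z.val.2, z.2.2⟩)
  invFun z := ⟨(z.1.val, z.2.val), ⟨z.1.2, z.2.2⟩⟩
  left_inv z := rfl
  right_inv z := rfl
  map_rel_iff' {z w} := by
    constructor
    · rintro ⟨h1, h2⟩; exact ⟨h1, h2⟩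
    · rintro ⟨h1, h2⟩; exact ⟨h1, h2⟩

/-- product of order isos -/
def prodCongrIso {α β γ δ : Type u} [PartialOrder α] [PartialOrder β] [PartialOrder γ]
    [PartialOrder δ] (e1 : α ≃o β) (e2 : γ ≃o δ) : α × γ ≃o β × δ where
  toFun p := (e1 p.1, e2 p.2)
  invFun p := (e1.symm p.1, e2.symm p.2)
  left_inv p := by simp
  right_inv p := by simp
  map_rel_iff' {p q} := by
    simp [Prod.le_def]

theorem irred_congr {α β : Type u} [PartialOrder α] [PartialOrder β] (e : α ≃o β)
    (h : IsIrreduciblePoset α) : IsIrreduciblePoset β := by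
  rintro ⟨A, B, pA, pB, ntA, ntB, ⟨f⟩⟩
  exact h ⟨A, B, pA, pB, ntA, ntB, ⟨e.trans f⟩⟩

theorem irred_small {α : Type u} [PartialOrder α] [Finite α] (h : Nat.card α < 4) :
    IsIrreduciblePoset α := by
  rintro ⟨A, B, pA, pB, ntA, ntB, ⟨f⟩⟩
  have hAB : Finite (A × B) := Finite.of_equiv α f.toEquiv
  have hA : Finite A := Finite.prod_left B
  have hB : Finite B := Finite.prod_right A
  have h2A : 2 ≤ Nat.card A := Finite.one_lt_card_iff_nontrivial.mpr ntA
  have h2B : 2 ≤ Nat.card B := Finite.one_lt_card_iff_nontrivial.mpr ntB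
  have hc : Nat.card α = Nat.card A * Nat.card B := by
    rw [Nat.card_congr f.toEquiv, Nat.card_prod]
  nlinarith

theorem nontrivial_Iic_iff {P : Type u} [PartialOrder P] [OrderBot P] {u : P} :
    Nontrivial (Set.Iic u) ↔ u ≠ ⊥ := by
  constructor
  · rintro ⟨z, w, hzw⟩ rfl
    exact hzw (Subtype.ext ((le_antisymm z.2 bot_le).trans (le_antisymm w.2 bot_le).symm))
  · intro hu
    exact ⟨⟨⊥, bot_le⟩, ⟨u, le_rfl⟩, fun h => hu (congrArg Subtype.val h).symm⟩

theorem exists_irred_atom {P : Type u} [PartialOrder P] [Fintype P] [OrderBot P] {a : P}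
    (ha : a ≠ ⊥) : ∃ t : P, IsIrredElem t ∧ ⊥ < t ∧ t ≤ a := by
  classical
  have hne : ({t : P | ⊥ < t ∧ t ≤ a} ∩ Set.univ).Nonempty := ⟨a, ⟨bot_lt_iff_ne_bot.mpr ha, le_rfl⟩, trivial⟩
  obtain ⟨t, ht, hmin⟩ : ∃ t ∈ ({t : P | ⊥ < t ∧ t ≤ a} ∩ Set.univ),
      ∀ z ∈ ({t : P | ⊥ < t ∧ t ≤ a} ∩ Set.univ), id z ≤ id t → id t = id z := by
    obtain ⟨t, ht⟩ := (Set.toFinite _).exists_minimal hne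
    exact ⟨t, ht.prop, fun z hz hzt => (ht.eq_of_le hz hzt).symm⟩
  refine ⟨t, ?_, ht.1.1, ht.1.2⟩
  -- Iic t ⊆ {⊥, t}
  have hsub : (Set.Iic t : Set P) ⊆ {⊥, t} := by
    intro z hz
    by_cases hzb : z = ⊥
    · exact Or.inl hzb
    · right
      have hz' : z ∈ ({t : P | ⊥ < t ∧ t ≤ a} ∩ Set.univ) :=
        ⟨⟨bot_lt_iff_ne_bot.mpr hzb, hz.trans ht.1.2⟩, trivial⟩
      exact (hmin z hz' hz).symm
  have hcard : Nat.card (Set.Iic t) < 4 := by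
    have : Nat.card (Set.Iic t) ≤ Nat.card ({⊥, t} : Set P) :=
      Nat.card_le_card_of_injective (fun z => (⟨z.val, hsub z.2⟩ : ({⊥, t} : Set P)))
        (fun z w h => Subtype.ext (congrArg Subtype.val h : _))
    have h2 : Nat.card ({⊥, t} : Set P) ≤ 2 := by
      rw [Nat.card_coe_set_eq]
      simpa using Set.ncard_insert_le (⊥ : P) {t}
    omega
  exact irred_small hcard
/- ## pi splitting -/

noncomputable def piSplitIso {P : Type u} (U S T : Set P)
    (hST : ∀ p, p ∈ U ↔ p ∈ S ∨ p ∈ T) (hdisj : ∀ p, p ∈ S → p ∈ T → False)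
    (F : P → Type u) [∀ p, PartialOrder (F p)] :
    ((p : U) → F p) ≃o ((p : S) → F p) × ((p : T) → F p) where
  toFun f := (fun p => f ⟨p, (hST p).2 (Or.inl p.2)⟩, fun p => f ⟨p, (hST p).2 (Or.inr p.2)⟩)
  invFun g p :=
    if h : (p : P) ∈ S then g.1 ⟨p, h⟩ else g.2 ⟨p, ((hST p).1 p.2).resolve_left h⟩
  left_inv f := by
    funext p
    by_cases h : (p : P) ∈ S <;> simp [h]
  right_inv g := by
    refine Prod.ext ?_ ?_
    · funext p
      have h : (p : P) ∈ S := p.2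
      simp [h]
    · funext p
      have h : ¬ (p : P) ∈ S := fun h => hdisj p h p.2
      simp [h]
  map_rel_iff' {f f'} := by
    constructor
    · rintro ⟨h1, h2⟩ p
      rcases (hST p).1 p.2 with h | h
      · exact h1 ⟨p, h⟩
      · exact h2 ⟨p, h⟩
    · intro h
      exact ⟨fun p => h _, fun p => h _⟩

/- ## elemDivisors basics -/

theorem self_mem_elemDivisors {P : Type u} [PartialOrder P] {x : P} (h : IsIrredElem x) :
    x ∈ elemDivisors x :=
  ⟨h, le_rfl, fun h' _ hle1 hle2 => le_antisymm hle1 hle2⟩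

theorem eq_self_of_mem_elemDivisors {P : Type u} [PartialOrder P] {x y : P}
    (h : IsIrredElem x) (hy : y ∈ elemDivisors x) : y = x :=
  (hy.2.2 x h le_rfl hy.2.1).symm

theorem ne_bot_of_mem_elemDivisors {P : Type u} [PartialOrder P] [Fintype P] [OrderBot P]
    {a y : P} (ha : a ≠ ⊥) (hy : y ∈ elemDivisors a) : y ≠ ⊥ := by
  obtain ⟨t, ht, htpos, hta⟩ := exists_irred_atom ha
  rintro rfl
  exact htpos.ne' (hy.2.2 t ht hta bot_le)

/- ## reduction lemma -/

theorem reduce {P : Type u} [PartialOrder P] [Fintype P] [OrderBot P] {x : P}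
    (h : ¬ IsIrredElem x) :
    ∃ (a b : P) (_ : a ≤ x) (_ : b ≤ x) (_ : a ≠ ⊥) (_ : b ≠ ⊥)
      (ψ : Set.Iic a × Set.Iic b ≃o Set.Iic x),
      (∀ u : Set.Iic a, ((ψ (u, ⊥)) : P) = u) ∧
      (∀ v : Set.Iic b, ((ψ (⊥, v)) : P) = v) := by
  simp only [IsIrredElem, IsIrreduciblePoset, not_not] at h
  obtain ⟨A, B, pA, pB, ntA, ntB, ⟨e⟩⟩ := h
  set bot : Set.Iic x := ⟨⊥, bot_le⟩ with hbotdef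
  set top : Set.Iic x := ⟨x, le_rfl⟩ with htopdef
  have hbot : ∀ p : A × B, e bot ≤ p := by
    intro p
    have h1 : bot ≤ e.symm p := bot_le
    have := e.monotone h1
    rwa [e.apply_symm_apply] at this
  have htop : ∀ p : A × B, p ≤ e top := by
    intro p
    have h1 : e.symm p ≤ top := (e.symm p).2
    have := e.monotone h1
    rwa [e.apply_symm_apply] at this
  set aI : Set.Iic x := e.symm ((e top).1, (e bot).2) with haI
  set bI : Set.Iic x := e.symm ((e bot).1, (e top).2) with hbI
  have heaI : e aI = ((e top).1, (e bot).2) := e.apply_symm_apply _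
  have hebI : e bI = ((e bot).1, (e top).2) := e.apply_symm_apply _
  -- key facts
  have key1 : ∀ (u : P) (hu : u ≤ (aI : P)), (e ⟨u, hu.trans aI.2⟩).2 = (e bot).2 := by
    intro u hu
    have h1 : (⟨u, hu.trans aI.2⟩ : Set.Iic x) ≤ aI := hu
    have h2 := e.monotone h1
    rw [heaI] at h2
    exact le_antisymm h2.2 (hbot (e ⟨u, hu.trans aI.2⟩)).2
  have key2 : ∀ (v : P) (hv : v ≤ (bI : P)), (e ⟨v, hv.trans bI.2⟩).1 = (e bot).1 := by
    intro v hv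
    have h1 : (⟨v, hv.trans bI.2⟩ : Set.Iic x) ≤ bI := hv
    have h2 := e.monotone h1
    rw [hebI] at h2
    exact le_antisymm h2.1 (hbot (e ⟨v, hv.trans bI.2⟩)).1
  -- the map
  refine ⟨(aI : P), (bI : P), aI.2, bI.2, ?_, ?_, ?_⟩
  · -- aI ≠ ⊥
    intro haB
    obtain ⟨p, q, hpq⟩ := ntA
    apply hpq
    have h0 : aI = bot := Subtype.ext haB
    have htb : (e top).1 = (e bot).1 := by
      have := congrArg (fun z => (e z).1) h0
      simpa [heaI] using this
    have hle : ∀ r : A, r = (e bot).1 := by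
      intro r
      have h1 : r ≤ (e top).1 := (htop (r, (e bot).2)).1
      have h2 : (e bot).1 ≤ r := (hbot (r, (e bot).2)).1
      rw [htb] at h1
      exact le_antisymm h1 h2
    rw [hle p, hle q]
  · -- bI ≠ ⊥
    intro hbB
    obtain ⟨p, q, hpq⟩ := ntB
    apply hpq
    have h0 : bI = bot := Subtype.ext hbB
    have htb : (e top).2 = (e bot).2 := by
      have := congrArg (fun z => (e z).2) h0
      simpa [hebI] using this
    have hle : ∀ r : B, r = (e bot).2 := by
      intro r
      have h1 : r ≤ (e top).2 := (htop ((e bot).1, r)).2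
      have h2 : (e bot).2 ≤ r := (hbot ((e bot).1, r)).2
      rw [htb] at h1
      exact le_antisymm h1 h2
    rw [hle p, hle q]
  · -- the iso
    set f : Set.Iic (aI : P) × Set.Iic (bI : P) → Set.Iic x :=
      fun p => e.symm ((e ⟨p.1.val, p.1.2.trans aI.2⟩).1, (e ⟨p.2.val, p.2.2.trans bI.2⟩).2)
      with hf
    have hga : ∀ y : Set.Iic x, (e.symm ((e y).1, (e bot).2) : P) ≤ (aI : P) := by
      intro y
      have h1 : ((e y).1, (e bot).2) ≤ ((e top).1, (e bot).2) :=
        ⟨(htop (e y)).1, le_rfl⟩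
      have := e.symm.monotone h1
      rw [← haI] at this
      exact this
    have hgb : ∀ y : Set.Iic x, (e.symm ((e bot).1, (e y).2) : P) ≤ (bI : P) := by
      intro y
      have h1 : ((e bot).1, (e y).2) ≤ ((e bot).1, (e top).2) :=
        ⟨le_rfl, (htop (e y)).2⟩
      have := e.symm.monotone h1
      rw [← hbI] at this
      exact this
    set g : Set.Iic x → Set.Iic (aI : P) × Set.Iic (bI : P) :=
      fun y => (⟨(e.symm ((e y).1, (e bot).2) : P), hga y⟩,
                ⟨(e.symm ((e bot).1, (e y).2) : P), hgb y⟩)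
      with hg
    have hgf : ∀ p, g (f p) = p := by
      rintro ⟨u, v⟩
      have h1 : e (f (u, v)) = ((e ⟨u.val, u.2.trans aI.2⟩).1, (e ⟨v.val, v.2.trans bI.2⟩).2) := by
        rw [hf]; exact e.apply_symm_apply _
      refine Prod.ext (Subtype.ext ?_) (Subtype.ext ?_)
      · show (e.symm ((e (f (u,v))).1, (e bot).2) : P) = u.val
        rw [h1]
        have h2 : ((e ⟨u.val, u.2.trans aI.2⟩).1, (e bot).2) = e ⟨u.val, u.2.trans aI.2⟩ := by
          rw [← key1 u.val u.2]
        rw [h2, e.symm_apply_apply]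
      · show (e.symm ((e bot).1, (e (f (u,v))).2) : P) = v.val
        rw [h1]
        have h2 : ((e bot).1, (e ⟨v.val, v.2.trans bI.2⟩).2) = e ⟨v.val, v.2.trans bI.2⟩ := by
          rw [← key2 v.val v.2]
        rw [h2, e.symm_apply_apply]
    have hfg : ∀ y, f (g y) = y := by
      intro y
      rw [hf]
      have e1 : (⟨((g y).1 : P), ((g y).1).2.trans aI.2⟩ : Set.Iic x)
          = e.symm ((e y).1, (e bot).2) := Subtype.ext rfl
      have e2 : (⟨((g y).2 : P), ((g y).2).2.trans bI.2⟩ : Set.Iic x)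
          = e.symm ((e bot).1, (e y).2) := Subtype.ext rfl
      show e.symm ((e ⟨((g y).1 : P), _⟩).1, (e ⟨((g y).2 : P), _⟩).2) = y
      rw [e1, e2, e.apply_symm_apply, e.apply_symm_apply]
      show e.symm ((e y).1, (e y).2) = y
      rw [Prod.mk.eta, e.symm_apply_apply]
    have hmf : Monotone f := by
      rintro ⟨u, v⟩ ⟨u', v'⟩ ⟨h1, h2⟩
      apply e.symm.monotone
      constructor
      · exact (e.monotone (show (⟨u.val, _⟩ : Set.Iic x) ≤ ⟨u'.val, _⟩ from h1)).1
      · exact (e.monotone (show (⟨v.val, _⟩ : Set.Iic x) ≤ ⟨v'.val, _⟩ from h2)).2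
    have hmg : Monotone g := by
      intro y y' hy
      constructor
      · exact e.symm.monotone ⟨(e.monotone hy).1, le_rfl⟩
      · exact e.symm.monotone ⟨le_rfl, (e.monotone hy).2⟩
    refine ⟨Equiv.toOrderIso ⟨f, g, hgf, hfg⟩ hmf hmg, ?_, ?_⟩
    · intro u
      show (f (u, ⊥) : P) = u
      rw [hf]
      have hb : (⟨((⊥ : Set.Iic (bI : P)) : P), _⟩ : Set.Iic x) = bot := Subtype.ext rfl
      show (e.symm ((e ⟨u.val, _⟩).1, (e ⟨((⊥ : Set.Iic (bI : P)) : P), _⟩).2) : P) = u.val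
      rw [hb]
      have h2 : ((e ⟨u.val, u.2.trans aI.2⟩).1, (e bot).2) = e ⟨u.val, u.2.trans aI.2⟩ := by
        rw [← key1 u.val u.2]
      rw [h2, e.symm_apply_apply]
    · intro v
      show (f (⊥, v) : P) = v
      rw [hf]
      have hb : (⟨((⊥ : Set.Iic (aI : P)) : P), _⟩ : Set.Iic x) = bot := Subtype.ext rfl
      show (e.symm ((e ⟨((⊥ : Set.Iic (aI : P)) : P), _⟩).1, (e ⟨v.val, _⟩).2) : P) = v.val
      rw [hb]
      have h2 : ((e bot).1, (e ⟨v.val, v.2.trans bI.2⟩).2) = e ⟨v.val, v.2.trans bI.2⟩ := by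
        rw [← key2 v.val v.2]
      rw [h2, e.symm_apply_apply]

/- ## structure of elemDivisors under a split -/

theorem elemDivisors_split {P : Type u} [PartialOrder P] [Fintype P] [OrderBot P] {x a b : P}
    (hax : a ≤ x) (hbx : b ≤ x) (ha : a ≠ ⊥) (hb : b ≠ ⊥)
    (ψ : Set.Iic a × Set.Iic b ≃o Set.Iic x)
    (hu : ∀ u : Set.Iic a, ((ψ (u, ⊥)) : P) = u)
    (hv : ∀ v : Set.Iic b, ((ψ (⊥, v)) : P) = v) :
    (∀ p, p ∈ elemDivisors x ↔ p ∈ elemDivisors a ∨ p ∈ elemDivisors b) ∧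
    (∀ p, p ∈ elemDivisors a → p ∈ elemDivisors b → False) := by
  -- y ≤ a and y ≤ b forces y = ⊥
  have both : ∀ y : P, y ≤ a → y ≤ b → y = ⊥ := by
    intro y hya hyb
    have h1 : ψ (⟨y, hya⟩, ⊥) = ⟨y, hya.trans hax⟩ := Subtype.ext (hu ⟨y, hya⟩)
    have h2 : ψ (⊥, ⟨y, hyb⟩) = ⟨y, hya.trans hax⟩ := Subtype.ext (hv ⟨y, hyb⟩)
    have h3 : ((⟨y, hya⟩, (⊥ : Set.Iic b)) : Set.Iic a × Set.Iic b) = (⊥, ⟨y, hyb⟩) :=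
      ψ.injective (h1.trans h2.symm)
    have h4 : (⟨y, hya⟩ : Set.Iic a) = ⊥ := congrArg Prod.fst h3
    exact congrArg Subtype.val h4
  -- each irreducible element below x lies below a or below b
  have split : ∀ y : P, y ≤ x → IsIrredElem y → y ≤ a ∨ y ≤ b := by
    intro y hy hyirr
    set w := ψ.symm ⟨y, hy⟩ with hw
    have hψw : ψ (w.1, w.2) = ⟨y, hy⟩ := by
      rw [Prod.mk.eta, hw, ψ.apply_symm_apply]
    by_cases h1 : (w.1 : P) = ⊥
    · right
      have hw1 : w.1 = ⊥ := Subtype.ext h1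
      have := hv w.2
      rw [← hw1, hψw] at this
      have h5 : y = (w.2 : P) := this
      rw [h5]
      exact w.2.2
    · -- then w.2 = ⊥
      have h2 : (w.2 : P) = ⊥ := by
        by_contra h2
        have n1 : Nontrivial (Set.Iic (w.1 : P)) := nontrivial_Iic_iff.mpr h1
        have n2 : Nontrivial (Set.Iic (w.2 : P)) := nontrivial_Iic_iff.mpr h2
        apply hyirr
        refine ⟨Set.Iic (w.1 : P), Set.Iic (w.2 : P), inferInstance, inferInstance, n1, n2, ⟨?_⟩⟩
        exact (iicIicIso hy).symm.trans ((ψ.symm.mapIic' ⟨y, hy⟩).trans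
          ((iicProdIso w.1 w.2).trans (prodCongrIso (iicIicIso w.1.2) (iicIicIso w.2.2))))
      left
      have hw2 : w.2 = ⊥ := Subtype.ext h2
      have := hu w.1
      rw [← hw2, hψw] at this
      have h5 : y = (w.1 : P) := this
      rw [h5]
      exact w.1.2
  constructor
  · intro p
    constructor
    · rintro ⟨hpirr, hpx, hpmax⟩
      rcases split p hpx hpirr with hpa | hpb
      · left
        exact ⟨hpirr, hpa, fun h' hh' hha hple => hpmax h' hh' (hha.trans hax) hple⟩
      · right
        exact ⟨hpirr, hpb, fun h' hh' hhb hple => hpmax h' hh' (hhb.trans hbx) hple⟩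
    · rintro (hp | hp)
      · have hpbot : p ≠ ⊥ := ne_bot_of_mem_elemDivisors ha hp
        refine ⟨hp.1, hp.2.1.trans hax, ?_⟩
        intro h' hh' hhx hple
        rcases split h' hhx hh' with hha | hhb
        · exact hp.2.2 h' hh' hha hple
        · exact absurd (both p (hp.2.1) (hple.trans hhb)) hpbot
      · have hpbot : p ≠ ⊥ := ne_bot_of_mem_elemDivisors hb hp
        refine ⟨hp.1, hp.2.1.trans hbx, ?_⟩
        intro h' hh' hhx hple
        rcases split h' hhx hh' with hha | hhb
        · exact absurd (both p (hple.trans hha) (hp.2.1)) hpbot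
        · exact hp.2.2 h' hh' hhb hple
  · intro p hpa hpb
    exact ne_bot_of_mem_elemDivisors ha hpa (both p hpa.2.1 hpb.2.1)

/- ## main induction -/

theorem main_aux {P : Type u} [PartialOrder P] [Fintype P] [OrderBot P] :
    ∀ n : ℕ, ∀ x : P, Nat.card (Set.Iic x) ≤ n →
      ∃ φ : ((y : elemDivisors x) → Set.Iic (y : P)) ≃o Set.Iic x,
        ∀ y : elemDivisors x,
          ((φ (deltaTuple {z | IsIrredElem z} x y) : Set.Iic x) : P) = (y : P) := by
  intro n
  induction n with
  | zero =>
    intro x hx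
    exfalso
    have hne : Nonempty (Set.Iic x) := ⟨⟨x, le_rfl⟩⟩
    have : 0 < Nat.card (Set.Iic x) := Nat.card_pos
    omega
  | succ n ih =>
    intro x hx
    by_cases hirr : IsIrredElem x
    · -- x itself is irreducible : elemDivisors x = {x}
      have hxmem : x ∈ elemDivisors x := self_mem_elemDivisors hirr
      have hval : ∀ y : elemDivisors x, (y : P) = x :=
        fun y => eq_self_of_mem_elemDivisors hirr y.2
      refine ⟨?_, ?_⟩
      · refine Equiv.toOrderIso ⟨?_, ?_, ?_, ?_⟩ ?_ ?_
        · exact fun f => f ⟨x, hxmem⟩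
        · exact fun z y => ⟨(z : P), by rw [hval y]; exact z.2⟩
        · intro f
          funext y
          obtain ⟨yv, hy⟩ := y
          have hyx : yv = x := hval ⟨yv, hy⟩
          subst hyx
          exact Subtype.ext rfl
        · intro z
          exact Subtype.ext rfl
        · intro f f' h
          exact h ⟨x, hxmem⟩
        · intro z z' h y
          obtain ⟨yv, hy⟩ := y
          have hyx : yv = x := hval ⟨yv, hy⟩
          subst hyx
          exact h
      · intro y
        show ((deltaTuple {z | IsIrredElem z} x y ⟨x, hxmem⟩ : Set.Iic x) : P) = (y : P)
        have hyx : (y : P) = x := hval y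
        simp [deltaTuple, hyx]
    · obtain ⟨a, b, hax, hbx, ha, hb, ψ, hu, hv⟩ := reduce hirr
      obtain ⟨hD, hdisj⟩ := elemDivisors_split hax hbx ha hb ψ hu hv
      have hcx : Nat.card (Set.Iic x) = Nat.card (Set.Iic a) * Nat.card (Set.Iic b) := by
        rw [← Nat.card_prod]
        exact (Nat.card_congr ψ.toEquiv).symm
      have h2a : 2 ≤ Nat.card (Set.Iic a) :=
        Finite.one_lt_card_iff_nontrivial.mpr (nontrivial_Iic_iff.mpr ha)
      have h2b : 2 ≤ Nat.card (Set.Iic b) :=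
        Finite.one_lt_card_iff_nontrivial.mpr (nontrivial_Iic_iff.mpr hb)
      have hca : Nat.card (Set.Iic a) ≤ n := by
        have h3 : Nat.card (Set.Iic a) * 2 ≤ n + 1 := by
          calc Nat.card (Set.Iic a) * 2 ≤ Nat.card (Set.Iic a) * Nat.card (Set.Iic b) :=
                Nat.mul_le_mul_left _ h2b
            _ = Nat.card (Set.Iic x) := hcx.symm
            _ ≤ n + 1 := hx
        omega
      have hcb : Nat.card (Set.Iic b) ≤ n := by
        have h3 : 2 * Nat.card (Set.Iic b) ≤ n + 1 := by
          calc 2 * Nat.card (Set.Iic b) ≤ Nat.card (Set.Iic a) * Nat.card (Set.Iic b) :=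
                Nat.mul_le_mul_right _ h2a
            _ = Nat.card (Set.Iic x) := hcx.symm
            _ ≤ n + 1 := hx
        omega
      obtain ⟨φa, hφa⟩ := ih a hca
      obtain ⟨φb, hφb⟩ := ih b hcb
      set E := piSplitIso (elemDivisors x) (elemDivisors a) (elemDivisors b) hD hdisj
        (fun p => Set.Iic p) with hEdef
      refine ⟨E.trans ((prodCongrIso φa φb).trans ψ), ?_⟩
      intro y
      rcases (hD y).1 y.2 with hya | hyb
      · have hE : E (deltaTuple {z | IsIrredElem z} x y)
            = (deltaTuple {z | IsIrredElem z} a ⟨(y : P), hya⟩, ⊥) := by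
          refine Prod.ext ?_ ?_
          · funext p
            show deltaTuple {z | IsIrredElem z} x y ⟨(p : P), _⟩
              = deltaTuple {z | IsIrredElem z} a ⟨(y : P), hya⟩ p
            simp [deltaTuple]
          · funext p
            have hne : (p : P) ≠ (y : P) := fun h => hdisj p (h ▸ hya) p.2
            show deltaTuple {z | IsIrredElem z} x y ⟨(p : P), _⟩ = _
            simp [deltaTuple, hne]; rfl
        rw [OrderIso.trans_apply, hE, OrderIso.trans_apply]
        show ((ψ (φa (deltaTuple {z | IsIrredElem z} a ⟨(y : P), hya⟩), φb ⊥)) : P) = (y : P)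
        rw [OrderIso.map_bot φb]
        have hA : φa (deltaTuple {z | IsIrredElem z} a ⟨(y : P), hya⟩)
            = ⟨(y : P), hya.2.1⟩ := Subtype.ext (hφa ⟨(y : P), hya⟩)
        rw [hA]
        exact hu ⟨(y : P), hya.2.1⟩
      · have hE : E (deltaTuple {z | IsIrredElem z} x y)
            = (⊥, deltaTuple {z | IsIrredElem z} b ⟨(y : P), hyb⟩) := by
          refine Prod.ext ?_ ?_
          · funext p
            have hne : (p : P) ≠ (y : P) := fun h => hdisj p p.2 (h ▸ hyb)
            show deltaTuple {z | IsIrredElem z} x y ⟨(p : P), _⟩ = _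
            simp [deltaTuple, hne]; rfl
          · funext p
            show deltaTuple {z | IsIrredElem z} x y ⟨(p : P), _⟩
              = deltaTuple {z | IsIrredElem z} b ⟨(y : P), hyb⟩ p
            simp [deltaTuple]
        rw [OrderIso.trans_apply, hE, OrderIso.trans_apply]
        show ((ψ (φa ⊥, φb (deltaTuple {z | IsIrredElem z} b ⟨(y : P), hyb⟩))) : P) = (y : P)
        rw [OrderIso.map_bot φa]
        have hB : φb (deltaTuple {z | IsIrredElem z} b ⟨(y : P), hyb⟩)
            = ⟨(y : P), hyb.2.1⟩ := Subtype.ext (hφb ⟨(y : P), hyb⟩)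
        rw [hB]
        exact hv ⟨(y : P), hyb.2.1⟩

/-- for a finite poset with a unique minimal element, the interval below any
element decomposes as the product of the intervals below its elementary divisors, via an
isomorphism sending delta tuples to the corresponding elementary divisors; moreover the
intervals below elementary divisors are irreducible. -/
theorem elemDivisors_decomposition {P : Type u} [PartialOrder P] [Fintype P] [OrderBot P]
    (x : P) :
    (∃ φ : ((y : elemDivisors x) → Set.Iic (y : P)) ≃o Set.Iic x,
        ∀ y : elemDivisors x,
          ((φ (deltaTuple {z | IsIrredElem z} x y) : Set.Iic x) : P) = (y : P)) ∧
    (∀ y ∈ elemDivisors x, IsIrreduciblePoset (Set.Iic y)) :=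
  ⟨main_aux (Nat.card (Set.Iic x)) x le_rfl, fun _ hy => hy.1⟩
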